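/- arXiv:1210.6460 — 5 statements merged into one kernel-verified Lean document; each statement's English description precedes it below -/
import Mathlib

section
/- Let G be a 2-connected bipartite graph and x, y adjacent vertices. If C is a shortest cycle through x and y (which exists and has even length), then the antipodal edge e' of e = xy on C satisfies μ_{x,y}(e') = 1; in particular Σ_{e∈E} μ_{x,y}(e) ≥ 2 = d(x,y) + 1. -/
open Finset

variable {V : Type*} [Fintype V] [DecidableEq V]

/-- Number of vertices strictly closer to `u` than to `v`. -/
noncomputable def nCloser (G : SimpleGraph V) (u v : V) : ℕ :=
  (Finset.univ.filter (fun w => G.dist u w < G.dist v w)).card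

/-- Number of vertices equidistant from `u` and `v`. -/
noncomputable def nEqual (G : SimpleGraph V) (u v : V) : ℕ :=
  (Finset.univ.filter (fun w => G.dist u w = G.dist v w)).card

/-- `n_0(e)` for an edge `e`. -/
noncomputable def nZero (G : SimpleGraph V) : Sym2 V → ℕ :=
  Sym2.lift ⟨fun u v => nEqual G u v, by
    intro u v
    unfold nEqual
    exact congrArg Finset.card (Finset.filter_congr fun w _ => eq_comm)⟩

/-- The contribution `n_u(e) * n_v(e)` of an edge `e`. -/
noncomputable def edgeContribution (G : SimpleGraph V) : Sym2 V → ℕ :=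
  Sym2.lift ⟨fun u v => nCloser G u v * nCloser G v u, fun u v => Nat.mul_comm _ _⟩

/-- The Szeged index `Sz(G) = ∑_{e = uv ∈ E} n_u(e) n_v(e)`. -/
noncomputable def szeged (G : SimpleGraph V) [DecidableRel G.Adj] : ℕ :=
  ∑ e ∈ G.edgeFinset, edgeContribution G e

/-- The revised Szeged index `Sz*(G) = ∑_{e=uv∈E} (n_u(e)+n_0(e)/2)(n_v(e)+n_0(e)/2)`. -/
noncomputable def szegedStar (G : SimpleGraph V) [DecidableRel G.Adj] : ℚ :=
  ∑ e ∈ G.edgeFinset,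
    Sym2.lift ⟨fun u v =>
      ((nCloser G u v : ℚ) + (nEqual G u v : ℚ) / 2) *
        ((nCloser G v u : ℚ) + (nEqual G u v : ℚ) / 2), by
      intro u v
      have h : nEqual G u v = nEqual G v u := by
        unfold nEqual
        exact congrArg Finset.card (Finset.filter_congr fun w _ => eq_comm)
      dsimp only; rw [h]; ring⟩ e

/-- The Wiener index `W(G) = ∑_{{x,y} ⊆ V} d(x,y)`. -/
noncomputable def wiener (G : SimpleGraph V) : ℕ :=
  ∑ p ∈ Finset.univ.sym2, Sym2.lift ⟨fun x y => G.dist x y, fun x y => G.dist_comm⟩ p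

/-- `μ_{x,y}(e)`: the indicator that `x` and `y` are strictly closer to
opposite endpoints of the edge `e`. -/
noncomputable def mu (G : SimpleGraph V) (x y : V) : Sym2 V → ℕ :=
  Sym2.lift ⟨fun u v =>
    if (G.dist x u < G.dist x v ∧ G.dist y v < G.dist y u) ∨
        (G.dist x v < G.dist x u ∧ G.dist y u < G.dist y v) then 1 else 0, by
    intro u v
    dsimp only; exact if_congr or_comm rfl rfl⟩

/-- A graph is 2-connected if it has at least 3 vertices and removing any
single vertex leaves it connected. -/
def TwoConnected (G : SimpleGraph V) : Prop :=
  3 ≤ Fintype.card V ∧ ∀ v : V, (G.induce {u : V | u ≠ v}).Connected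



namespace SimpleGraph.Walk

variable {V : Type*} {G : SimpleGraph V}

/-- The first `n` darts of a walk, as a walk. -/
def takeN {u v : V} : (p : G.Walk u v) → (n : ℕ) → G.Walk u (p.getVert n)
  | .nil, _ => .nil
  | .cons _ _, 0 => .nil
  | .cons h q, n + 1 => .cons h (q.takeN n)

/-- The walk after removing the first `n` darts. -/
def dropN {u v : V} : (p : G.Walk u v) → (n : ℕ) → G.Walk (p.getVert n) v
  | .nil, _ => .nil
  | .cons h q, 0 => .cons h q
  | .cons _ q, n + 1 => q.dropN n

@[simp] lemma length_takeN {u v : V} :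
    ∀ (p : G.Walk u v) (n : ℕ), (p.takeN n).length = min n p.length
  | .nil, n => by simp [takeN]
  | .cons _ _, 0 => by simp [takeN]; rfl
  | .cons h q, n + 1 => by
      show (q.takeN n).length + 1 = min (n + 1) (q.length + 1)
      rw [length_takeN q n]
      omega

@[simp] lemma length_dropN {u v : V} :
    ∀ (p : G.Walk u v) (n : ℕ), (p.dropN n).length = p.length - n
  | .nil, n => by simp [dropN]
  | .cons _ _, 0 => by simp [dropN]; rfl
  | .cons h q, n + 1 => by
      show (q.dropN n).length = (q.length + 1) - (n + 1)
      rw [length_dropN q n]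
      omega

@[simp] lemma edges_takeN {u v : V} :
    ∀ (p : G.Walk u v) (n : ℕ), (p.takeN n).edges = p.edges.take n
  | .nil, n => by simp [takeN]
  | .cons _ _, 0 => by simp [takeN]; rfl
  | .cons h q, n + 1 => by simp [takeN, edges_takeN q n]

@[simp] lemma edges_dropN {u v : V} :
    ∀ (p : G.Walk u v) (n : ℕ), (p.dropN n).edges = p.edges.drop n
  | .nil, n => by simp [dropN]
  | .cons _ _, 0 => by simp [dropN]; rfl
  | .cons h q, n + 1 => by simp [dropN, edges_dropN q n]

lemma getVert_takeN {u v : V} :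
    ∀ (p : G.Walk u v) {i n : ℕ}, i ≤ n → (p.takeN n).getVert i = p.getVert i
  | .nil, i, n, _ => by simp [takeN]
  | .cons _ _, 0, 0, _ => rfl
  | .cons h q, 0, n + 1, _ => rfl
  | .cons h q, i + 1, n + 1, hin => by
      simpa [takeN, getVert_cons_succ] using getVert_takeN q (Nat.succ_le_succ_iff.mp hin)

lemma color_even_length (C : G.Coloring (Fin 2)) {u v : V} (p : G.Walk u v) :
    Even p.length ↔ C u = C v := by
  have fin2 : ∀ a b c : Fin 2, a ≠ b → a ≠ c → b = c := by decide
  induction p with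
  | nil => simp
  | @cons a b w h q ih =>
    have hne : C a ≠ C b := C.valid h
    simp only [length_cons, Nat.even_add_one, ih]
    constructor
    · intro hbw
      by_contra haw
      exact hbw (fin2 _ _ _ hne haw)
    · intro haw hbw
      exact hne (haw.trans hbw.symm)

lemma edges_head {u v : V} (p : G.Walk u v) (hp : 0 < p.length) :
    p.edges = s(u, p.getVert 1) :: p.edges.tail := by
  cases p with
  | nil => simp at hp
  | cons h q => simp [getVert_cons_succ]

lemma exists_tail_of_first_edge {u v w : V} (p : G.Walk u v) (hp : p.IsPath)
    (h : s(u, w) ∈ p.edges) :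
    ∃ q : G.Walk w v, q.length + 1 = p.length ∧ u ∉ q.support := by
  cases p with
  | nil => simp at h
  | @cons a b c' hab q =>
    have hns : u ∉ q.support := ((Walk.cons_isPath_iff _ _).mp hp).2
    rw [Walk.edges_cons] at h
    rcases List.mem_cons.mp h with heq | hmem
    · obtain rfl : w = b := Sym2.congr_right.mp heq
      exact ⟨q, by simp, hns⟩
    · exact absurd (Walk.fst_mem_support_of_mem_edges q hmem) hns

end SimpleGraph.Walk

lemma mem_tail_of_mem_drop {α : Type*} {l : List α} {n : ℕ} (hn : 1 ≤ n) {a : α}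
    (h : a ∈ l.drop n) : a ∈ l.tail := by
  rw [← List.drop_one]
  have he : l.drop n = (l.drop 1).drop (n - 1) := by
    rw [List.drop_drop]
    congr 1
    omega
  rw [he] at h
  exact List.drop_subset _ _ h

lemma mem_tail_of_mem_drop_take {α : Type*} {l : List α} {m : ℕ} {a : α}
    (h : a ∈ (l.take m).drop 1) : a ∈ l.tail := by
  rw [List.drop_take] at h
  rw [← List.drop_one]
  exact List.take_subset _ _ h

theorem mu_antipodal_edge (G : SimpleGraph V) [DecidableRel G.Adj]
    (h2 : TwoConnected G) (hbip : G.Colorable 2) (x y : V) (hadj : G.Adj x y)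
    (c : G.Walk x x) (hc : c.IsCycle) (hy : c.getVert 1 = y)
    (hxy : s(x, y) ∈ c.edges)
    (hmin : ∀ c' : G.Walk x x, c'.IsCycle → y ∈ c'.support → c.length ≤ c'.length) :
    mu G x y s(c.getVert (c.length / 2), c.getVert (c.length / 2 + 1)) = 1 ∧
    G.dist x y + 1 ≤ ∑ e ∈ G.edgeFinset, mu G x y e := by
  classical
  obtain ⟨C⟩ := hbip
  set L := c.length with hLdef
  have hL3 : 3 ≤ L := hc.three_le_length
  have hLeven : Even L := (SimpleGraph.Walk.color_even_length C c).mpr rfl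
  obtain ⟨k0, hk0⟩ := hLeven
  set k := L / 2 with hkdef
  have hk : L = 2 * k := by omega
  have hk2 : 2 ≤ k := by omega
  set u' := c.getVert k with hu'def
  set w' := c.getVert (k + 1) with hw'def
  -- the four arc walks
  set W1 : G.Walk x u' := c.takeN k with hW1def
  have hW1 : W1.length = min k L := c.length_takeN k
  have hW1' : W1.length = k := by omega
  set W2 : G.Walk w' x := c.dropN (k + 1) with hW2def
  have hW2 : W2.length = L - (k + 1) := c.length_dropN (k + 1)
  have hW2' : W2.length = k - 1 := by omega
  have hyk : (c.takeN k).getVert 1 = y := by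
    rw [c.getVert_takeN (by omega : 1 ≤ k)]; exact hy
  set W3 : G.Walk y u' := ((c.takeN k).dropN 1).copy hyk rfl with hW3def
  have hW3 : W3.length = k - 1 := by
    rw [hW3def, SimpleGraph.Walk.length_copy, SimpleGraph.Walk.length_dropN,
      SimpleGraph.Walk.length_takeN]
    omega
  have hyk1 : (c.takeN (k + 1)).getVert 1 = y := by
    rw [c.getVert_takeN (by omega : 1 ≤ k + 1)]; exact hy
  set W4 : G.Walk y w' := ((c.takeN (k + 1)).dropN 1).copy hyk1 rfl with hW4def
  have hW4 : W4.length = k := by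
    rw [hW4def, SimpleGraph.Walk.length_copy, SimpleGraph.Walk.length_dropN,
      SimpleGraph.Walk.length_takeN]
    omega
  -- the edge s(x,y) is the first edge of c, hence not in the tail of c.edges
  have hxyTail : s(x, y) ∉ c.edges.tail := by
    have hn := hc.edges_nodup
    rw [c.edges_head (by omega), hy] at hn
    exact (List.nodup_cons.mp hn).1
  have hW2e : s(x, y) ∉ W2.edges := by
    intro hmem
    rw [hW2def, SimpleGraph.Walk.edges_dropN] at hmem
    exact hxyTail (mem_tail_of_mem_drop (by omega) hmem)
  have hW3e : s(x, y) ∉ W3.edges := by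
    intro hmem
    rw [hW3def, SimpleGraph.Walk.edges_copy, SimpleGraph.Walk.edges_dropN,
      SimpleGraph.Walk.edges_takeN] at hmem
    exact hxyTail (mem_tail_of_mem_drop_take hmem)
  have hW4e : s(x, y) ∉ W4.edges := by
    intro hmem
    rw [hW4def, SimpleGraph.Walk.edges_copy, SimpleGraph.Walk.edges_dropN,
      SimpleGraph.Walk.edges_takeN] at hmem
    exact hxyTail (mem_tail_of_mem_drop_take hmem)
  have hWke : s(x, y) ∉ (c.dropN k).edges := by
    intro hmem
    rw [SimpleGraph.Walk.edges_dropN] at hmem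
    exact hxyTail (mem_tail_of_mem_drop (by omega) hmem)
  -- key: any short x-y walk avoiding the edge xy yields a short cycle, contradiction
  have key : ∀ Q : G.Walk x y, s(x, y) ∉ Q.edges → Q.length + 2 ≤ L → False := by
    intro Q hQe hQl
    have hRe : s(x, y) ∉ (Q.toPath : G.Walk x y).edges :=
      fun h => hQe (Q.edges_toPath_subset h)
    have hcoe : (Q.toPath.reverse : G.Walk y x) = (Q.toPath : G.Walk x y).reverse := rfl
    have hPe : s(x, y) ∉ (Q.toPath.reverse : G.Walk y x).edges := by
      rw [hcoe, SimpleGraph.Walk.edges_reverse, List.mem_reverse]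
      exact hRe
    have hcyc := SimpleGraph.Path.cons_isCycle Q.toPath.reverse hadj hPe
    have hmem : y ∈ (SimpleGraph.Walk.cons hadj (Q.toPath.reverse : G.Walk y x)).support := by
      rw [SimpleGraph.Walk.support_cons]
      exact List.mem_cons_of_mem _ (SimpleGraph.Walk.start_mem_support _)
    have hlb := hmin _ hcyc hmem
    have hlen : (SimpleGraph.Walk.cons hadj (Q.toPath.reverse : G.Walk y x)).length
        = (Q.toPath : G.Walk x y).length + 1 := by
      rw [SimpleGraph.Walk.length_cons, hcoe, SimpleGraph.Walk.length_reverse]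
    have hble : (Q.toPath : G.Walk x y).length ≤ Q.length := Q.length_bypass_le
    omega
  -- lower bound A : k ≤ dist x u'
  have hA : k ≤ G.dist x u' := by
    by_contra hlt
    push_neg at hlt
    obtain ⟨P, hPp, hPl⟩ := (SimpleGraph.Reachable.exists_path_of_dist ⟨W1⟩ : _)
    have hpar : Even P.length ↔ Even k := by
      rw [SimpleGraph.Walk.color_even_length C P, ← hW1',
        ← SimpleGraph.Walk.color_even_length C W1]
    rw [Nat.even_iff, Nat.even_iff] at hpar
    have hd2 : P.length + 2 ≤ k := by omega
    by_cases hxyP : s(x, y) ∈ P.edges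
    · obtain ⟨q, hql, hqx⟩ := P.exists_tail_of_first_edge hPp hxyP
      have hqe : s(x, y) ∉ q.edges :=
        fun h => hqx (SimpleGraph.Walk.fst_mem_support_of_mem_edges q h)
      refine key ((c.dropN k).reverse.append q.reverse) ?_ ?_
      · rw [SimpleGraph.Walk.edges_append, SimpleGraph.Walk.edges_reverse,
          SimpleGraph.Walk.edges_reverse]
        intro hmem
        rcases List.mem_append.mp hmem with h | h
        · exact hWke (List.mem_reverse.mp h)
        · exact hqe (List.mem_reverse.mp h)
      · rw [SimpleGraph.Walk.length_append, SimpleGraph.Walk.length_reverse,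
          SimpleGraph.Walk.length_reverse, SimpleGraph.Walk.length_dropN]
        omega
    · refine key (P.append W3.reverse) ?_ ?_
      · rw [SimpleGraph.Walk.edges_append, SimpleGraph.Walk.edges_reverse]
        intro hmem
        rcases List.mem_append.mp hmem with h | h
        · exact hxyP h
        · exact hW3e (List.mem_reverse.mp h)
      · rw [SimpleGraph.Walk.length_append, SimpleGraph.Walk.length_reverse, hW3]
        omega
  -- lower bound B : k ≤ dist y w'
  have hB : k ≤ G.dist y w' := by
    by_contra hlt
    push_neg at hlt
    obtain ⟨P, hPp, hPl⟩ := (SimpleGraph.Reachable.exists_path_of_dist ⟨W4⟩ : _)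
    have hpar : Even P.length ↔ Even k := by
      rw [SimpleGraph.Walk.color_even_length C P, ← hW4,
        ← SimpleGraph.Walk.color_even_length C W4]
    rw [Nat.even_iff, Nat.even_iff] at hpar
    have hd2 : P.length + 2 ≤ k := by omega
    by_cases hxyP : s(x, y) ∈ P.edges
    · have hyx : s(y, x) ∈ P.edges := by rwa [Sym2.eq_swap] at hxyP
      obtain ⟨q, hql, hqy⟩ := P.exists_tail_of_first_edge hPp hyx
      have hqe : s(x, y) ∉ q.edges :=
        fun h => hqy (SimpleGraph.Walk.snd_mem_support_of_mem_edges q h)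
      refine key (q.append W4.reverse) ?_ ?_
      · rw [SimpleGraph.Walk.edges_append, SimpleGraph.Walk.edges_reverse]
        intro hmem
        rcases List.mem_append.mp hmem with h | h
        · exact hqe h
        · exact hW4e (List.mem_reverse.mp h)
      · rw [SimpleGraph.Walk.length_append, SimpleGraph.Walk.length_reverse, hW4]
        omega
    · refine key (W2.reverse.append P.reverse) ?_ ?_
      · rw [SimpleGraph.Walk.edges_append, SimpleGraph.Walk.edges_reverse,
          SimpleGraph.Walk.edges_reverse]
        intro hmem
        rcases List.mem_append.mp hmem with h | h
        · exact hW2e (List.mem_reverse.mp h)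
        · exact hxyP (List.mem_reverse.mp h)
      · rw [SimpleGraph.Walk.length_append, SimpleGraph.Walk.length_reverse,
          SimpleGraph.Walk.length_reverse, hW2']
        omega
  -- exact distances
  have hxu : G.dist x u' = k := le_antisymm (hW1' ▸ SimpleGraph.dist_le W1) hA
  have hyw : G.dist y w' = k := le_antisymm (hW4 ▸ SimpleGraph.dist_le W4) hB
  have hxw : G.dist x w' ≤ k - 1 := by
    have h := SimpleGraph.dist_le W2.reverse
    rwa [SimpleGraph.Walk.length_reverse, hW2'] at h
  have hyu : G.dist y u' ≤ k - 1 := hW3 ▸ SimpleGraph.dist_le W3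
  -- mu of the antipodal edge is 1
  have hmu2 : mu G x y s(u', w') = 1 := by
    rw [mu, Sym2.lift_mk]
    exact if_pos (Or.inr ⟨by omega, by omega⟩)
  have hdxy : G.dist x y = 1 := SimpleGraph.dist_eq_one_iff_adj.mpr hadj
  have hdyx : G.dist y x = 1 := by rwa [SimpleGraph.dist_comm] at hdxy
  have hmu1 : mu G x y s(x, y) = 1 := by
    rw [mu, Sym2.lift_mk]
    refine if_pos (Or.inl ⟨?_, ?_⟩)
    · rw [SimpleGraph.dist_self, hdxy]; omega
    · rw [SimpleGraph.dist_self, hdyx]; omega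
  have hne : s(x, y) ≠ s(u', w') := by
    intro h
    rcases Sym2.eq_iff.mp h with ⟨h1, h2⟩ | ⟨h1, h2⟩
    · rw [← h1, SimpleGraph.dist_self] at hxu; omega
    · rw [← h1, hdyx] at hyw
      omega
  refine ⟨hmu2, ?_⟩
  have hm1 : s(x, y) ∈ G.edgeFinset := by
    rw [SimpleGraph.mem_edgeFinset, SimpleGraph.mem_edgeSet]; exact hadj
  have hm2 : s(u', w') ∈ G.edgeFinset := by
    rw [SimpleGraph.mem_edgeFinset, SimpleGraph.mem_edgeSet]
    exact c.adj_getVert_succ (by omega)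
  have hsub : ({s(x, y), s(u', w')} : Finset (Sym2 V)) ⊆ G.edgeFinset := by
    intro e he
    rcases Finset.mem_insert.mp he with rfl | he
    · exact hm1
    · rw [Finset.mem_singleton] at he; subst he; exact hm2
  calc G.dist x y + 1 = 2 := by rw [hdxy]
    _ = ∑ e ∈ ({s(x, y), s(u', w')} : Finset (Sym2 V)), mu G x y e := by
        rw [Finset.sum_pair hne, hmu1, hmu2]
    _ ≤ ∑ e ∈ G.edgeFinset, mu G x y e := Finset.sum_le_sum_of_subset hsub
end

section
/- Let G be a 2-connected bipartite graph. Then for every pair of distinct vertices x, y, Σ_{e∈E} μ_{x,y}(e) ≥ d(x,y) + 1. -/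
open Finset

variable {V : Type*} [Fintype V] [DecidableEq V]

section Aux

variable {V : Type*} [Fintype V] [DecidableEq V] {G : SimpleGraph V}

private lemma two_conn_avoid (h2 : TwoConnected G) (w a b : V) (ha : a ≠ w) (hb : b ≠ w) :
    ∃ p : G.Walk a b, w ∉ p.support := by
  obtain ⟨q⟩ := (h2.2 w).preconnected ⟨a, ha⟩ ⟨b, hb⟩
  refine ⟨q.map (SimpleGraph.Embedding.induce _).toHom, ?_⟩
  intro hw
  erw [SimpleGraph.Walk.support_map] at hw
  obtain ⟨z, hz, hz2⟩ := List.mem_map.mp hw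
  exact z.prop hz2

private lemma exists_third (h3 : 3 ≤ Fintype.card V) (a b : V) :
    ∃ z : V, z ≠ a ∧ z ≠ b := by
  by_contra h
  push_neg at h
  have hsub : (Finset.univ : Finset V) ⊆ {a, b} := by
    intro z _
    by_cases hz : z = a
    · simp [hz]
    · simp [h z hz]
  have hle := Finset.card_le_card hsub
  have h2 : ({a, b} : Finset V).card ≤ 2 := Finset.card_le_two ..
  rw [Finset.card_univ] at hle
  omega

private lemma two_conn_connected (h2 : TwoConnected G) : G.Connected := by
  have hne : Nonempty V := Fintype.card_pos_iff.mp (by have := h2.1; omega)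
  have hpre : G.Preconnected := by
    intro a b
    by_cases hab : a = b
    · exact hab ▸ SimpleGraph.Reachable.refl a
    · obtain ⟨w, hw1, hw2⟩ := exists_third h2.1 a b
      obtain ⟨p, -⟩ := two_conn_avoid h2 w a b (Ne.symm hw1) (Ne.symm hw2)
      exact ⟨p⟩
  haveI := hne
  exact SimpleGraph.Connected.mk hpre

private lemma exists_adj_avoid (h2 : TwoConnected G) {x y : V} (hxy : x ≠ y) :
    ∃ w, G.Adj x w ∧ w ≠ y := by
  obtain ⟨z, hz1, hz2⟩ := exists_third h2.1 x y
  obtain ⟨p, hp⟩ := two_conn_avoid h2 y x z hxy hz2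
  cases p with
  | nil => exact absurd rfl hz1
  | cons h q =>
    refine ⟨_, h, fun hwy => hp ?_⟩
    subst hwy
    simp [SimpleGraph.Walk.support_cons]

private lemma walk_parity (c : G.Coloring (Fin 2)) {a b : V} (p : G.Walk a b) :
    ((p.length : ZMod 2)) = ((c a : ℕ) : ZMod 2) + ((c b : ℕ) : ZMod 2) := by
  induction p with
  | nil =>
    have : ∀ i : Fin 2, ((i : ℕ) : ZMod 2) + ((i : ℕ) : ZMod 2) = 0 := by decide
    simp [this]
  | cons h q ih =>
    have hne := c.valid h
    have key : ∀ i j : Fin 2, i ≠ j → ((i : ℕ) : ZMod 2) = ((j : ℕ) : ZMod 2) + 1 := by decide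
    rw [SimpleGraph.Walk.length_cons, Nat.cast_add, Nat.cast_one, ih, key _ _ hne]
    ring

private lemma parity3 (hbip : G.Colorable 2) (hconn : G.Connected) (a b c : V) :
    (2 : ℤ) ∣ ((G.dist a b : ℤ) + (G.dist a c : ℤ) + (G.dist b c : ℤ)) := by
  obtain ⟨co⟩ := hbip
  have key : ∀ u v : V, ((G.dist u v : ℕ) : ZMod 2)
      = ((co u : ℕ) : ZMod 2) + ((co v : ℕ) : ZMod 2) := by
    intro u v
    obtain ⟨p, hp⟩ := hconn.exists_walk_length_eq_dist u v
    rw [← hp]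
    exact walk_parity co p
  have hz : (((G.dist a b + G.dist a c + G.dist b c : ℕ)) : ZMod 2) = 0 := by
    push_cast
    rw [key a b, key a c, key b c]
    have h20 : (2 : ZMod 2) = 0 := rfl
    linear_combination (((co a : ℕ) : ZMod 2) + ((co b : ℕ) : ZMod 2) + ((co c : ℕ) : ZMod 2)) * h20
  have := (ZMod.natCast_eq_zero_iff _ 2).mp hz
  exact_mod_cast Int.natCast_dvd_natCast.mpr this

private lemma exists_cross (f : V → ℤ) (t : ℤ) :
    ∀ {a b : V} (p : G.Walk a b), f a < t → t ≤ f b →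
      ∃ u v, G.Adj u v ∧ f u < t ∧ t ≤ f v ∧ s(u, v) ∈ p.edges := by
  intro a b p
  induction p with
  | nil => intro ha hb; exact absurd hb (not_le.mpr ha)
  | @cons a' c' b' h q ih =>
    intro ha hb
    by_cases hc : t ≤ f c'
    · exact ⟨a', c', h, ha, hc, by simp⟩
    · obtain ⟨u, v, h1, h2, h3, h4⟩ := ih (not_le.mp hc) hb
      exact ⟨u, v, h1, h2, h3, by simp [h4]⟩

private lemma dist_adj_le (hconn : G.Connected) {u v : V} (h : G.Adj u v) (w : V) :
    G.dist w v ≤ G.dist w u + 1 := by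
  have ht := hconn.dist_triangle (u := w) (v := u) (w := v)
  rwa [SimpleGraph.dist_eq_one_iff_adj.mpr h] at ht

end Aux

private noncomputable def fvert (G : SimpleGraph V) (x y v : V) : ℤ :=
  (G.dist x v : ℤ) - (G.dist y v : ℤ)

private lemma fvert_def (G : SimpleGraph V) (x y v : V) :
    fvert G x y v = (G.dist x v : ℤ) - (G.dist y v : ℤ) := rfl

private noncomputable def idxE (G : SimpleGraph V) (x y : V) : Sym2 V → ℕ :=
  Sym2.lift ⟨fun u v => ((min (fvert G x y u) (fvert G x y v) + G.dist x y) / 2).toNat,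
    fun u v => by dsimp only; rw [min_comm]⟩

private lemma idxE_mk (G : SimpleGraph V) (x y u v : V) :
    idxE G x y s(u, v) = ((min (fvert G x y u) (fvert G x y v) + G.dist x y) / 2).toNat :=
  Sym2.lift_mk ..

theorem sum_mu_ge_dist_add_one (G : SimpleGraph V) [DecidableRel G.Adj]
    (h2 : TwoConnected G) (hbip : G.Colorable 2) (x y : V) (hxy : x ≠ y) :
    G.dist x y + 1 ≤ ∑ e ∈ G.edgeFinset, mu G x y e := by
  classical
  have hconn : G.Connected := two_conn_connected h2
  have hd1 : 1 ≤ G.dist x y := hconn.pos_dist_of_ne hxy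
  have hfx : fvert G x y x = -(G.dist x y : ℤ) := by
    have h1 : G.dist y x = G.dist x y := SimpleGraph.dist_comm
    rw [fvert_def, h1, SimpleGraph.dist_self]
    ring
  have hfy : fvert G x y y = (G.dist x y : ℤ) := by
    rw [fvert_def, SimpleGraph.dist_self]
    ring
  have lip : ∀ (a u v : V), G.Adj u v → G.dist a v ≤ G.dist a u + 1 :=
    fun a u v h => dist_adj_le hconn h a
  have hmu1 : ∀ {u v : V}, G.Adj u v → fvert G x y v - fvert G x y u = 2 →
      mu G x y s(u, v) = 1 := by
    intro u v h hfd
    have h1 := lip x u v h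
    have h2 := lip x v u h.symm
    have h3 := lip y u v h
    have h4 := lip y v u h.symm
    have eu := fvert_def G x y u
    have ev := fvert_def G x y v
    have hcond : G.dist x u < G.dist x v ∧ G.dist y v < G.dist y u := by omega
    rw [mu, Sym2.lift_mk]
    exact if_pos (Or.inl hcond)
  have hmu2 : ∀ {u v : V}, G.Adj u v → mu G x y s(u, v) = 1 →
      fvert G x y v - fvert G x y u = 2 ∨ fvert G x y u - fvert G x y v = 2 := by
    intro u v h hm
    have h1 := lip x u v h
    have h2 := lip x v u h.symm
    have h3 := lip y u v h
    have h4 := lip y v u h.symm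
    have eu := fvert_def G x y u
    have ev := fvert_def G x y v
    by_cases hc : (G.dist x u < G.dist x v ∧ G.dist y v < G.dist y u) ∨
        (G.dist x v < G.dist x u ∧ G.dist y u < G.dist y v)
    · rcases hc with ⟨a1, a2⟩ | ⟨a1, a2⟩
      · left; omega
      · right; omega
    · exfalso
      have hm' : mu G x y s(u, v) = 0 := by
        rw [mu, Sym2.lift_mk]
        exact if_neg hc
      rw [hm] at hm'
      exact one_ne_zero hm'
  have hlb : ∀ v, -(G.dist x y : ℤ) ≤ fvert G x y v := by
    intro v
    have ht := hconn.dist_triangle (u := y) (v := x) (w := v)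
    have h1 : G.dist y x = G.dist x y := SimpleGraph.dist_comm
    have ev := fvert_def G x y v
    omega
  have hub : ∀ v, fvert G x y v ≤ (G.dist x y : ℤ) := by
    intro v
    have ht := hconn.dist_triangle (u := x) (v := y) (w := v)
    have ev := fvert_def G x y v
    omega
  have hpar : ∀ v, (2 : ℤ) ∣ (fvert G x y v + G.dist x y) := by
    intro v
    have hp := parity3 hbip hconn x y v
    have ev := fvert_def G x y v
    omega
  set S : Finset (Sym2 V) := G.edgeFinset.filter (fun e => mu G x y e = 1) with hS
  have hSsum : S.card ≤ ∑ e ∈ G.edgeFinset, mu G x y e := by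
    have h1 : S.card = ∑ e ∈ S, mu G x y e := by
      rw [Finset.card_eq_sum_ones]
      exact Finset.sum_congr rfl fun e he => ((Finset.mem_filter.mp he).2).symm
    rw [h1]
    exact Finset.sum_le_sum_of_subset (Finset.filter_subset _ _)
  have master : ∀ (t : ℤ), (2 : ℤ) ∣ (t + G.dist x y) → ∀ {a b : V} (p : G.Walk a b),
      fvert G x y a < t → t ≤ fvert G x y b →
      ∃ u v, G.Adj u v ∧ fvert G x y u = t - 2 ∧ fvert G x y v = t ∧
        s(u, v) ∈ p.edges ∧ s(u, v) ∈ S := by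
    intro t ht a b p ha hb
    obtain ⟨u, v, hadj, hu, hv, hedge⟩ := exists_cross (fvert G x y) t p ha hb
    have h1 := lip x u v hadj
    have h2 := lip x v u hadj.symm
    have h3 := lip y u v hadj
    have h4 := lip y v u hadj.symm
    have eu := fvert_def G x y u
    have ev := fvert_def G x y v
    have hpu := hpar u
    have hpv := hpar v
    have hfuv : fvert G x y u = t - 2 ∧ fvert G x y v = t := by omega
    have hmu := hmu1 hadj (by omega)
    refine ⟨u, v, hadj, hfuv.1, hfuv.2, hedge, ?_⟩
    rw [hS, Finset.mem_filter, SimpleGraph.mem_edgeFinset, SimpleGraph.mem_edgeSet]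
    exact ⟨hadj, hmu⟩
  have hmaps : ∀ e ∈ S, idxE G x y e ∈ Finset.range (G.dist x y) := by
    intro e
    induction e using Sym2.ind with
    | _ u v =>
      intro he
      rw [hS, Finset.mem_filter, SimpleGraph.mem_edgeFinset, SimpleGraph.mem_edgeSet] at he
      obtain ⟨hadj, hm⟩ := he
      have hdd := hmu2 hadj hm
      have hlu := hlb u
      have hlv := hlb v
      have huu := hub u
      have huv := hub v
      have hpu := hpar u
      rw [Finset.mem_range, idxE_mk]
      rcases le_total (fvert G x y u) (fvert G x y v) with hle | hle
      · rw [min_eq_left hle]; omega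
      · rw [min_eq_right hle]; omega
  have hcard : S.card = ∑ k ∈ Finset.range (G.dist x y),
      (S.filter fun e => idxE G x y e = k).card :=
    Finset.card_eq_sum_card_fiberwise hmaps
  obtain ⟨p0⟩ := hconn.preconnected x y
  have hfiber : ∀ k ∈ Finset.range (G.dist x y),
      1 ≤ (S.filter fun e => idxE G x y e = k).card := by
    intro k hk
    rw [Finset.mem_range] at hk
    have ht : (2 : ℤ) ∣ ((-(G.dist x y : ℤ) + 2 * k + 2) + G.dist x y) := ⟨k + 1, by ring⟩
    obtain ⟨u, v, hadj, hu, hv, -, hSm⟩ :=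
      master _ ht p0 (by rw [hfx]; omega) (by rw [hfy]; omega)
    refine Finset.card_pos.mpr ⟨s(u, v), Finset.mem_filter.mpr ⟨hSm, ?_⟩⟩
    rw [idxE_mk, hu, hv, min_eq_left (by omega)]
    omega
  have hfiber0 : 2 ≤ (S.filter fun e => idxE G x y e = 0).card := by
    have ht : (2 : ℤ) ∣ ((-(G.dist x y : ℤ) + 2) + G.dist x y) := ⟨1, by ring⟩
    have hx0 : fvert G x y x < -(G.dist x y : ℤ) + 2 := by rw [hfx]; omega
    have hy0 : -(G.dist x y : ℤ) + 2 ≤ fvert G x y y := by rw [hfy]; omega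
    have hidx : ∀ {u v : V}, fvert G x y u = -(G.dist x y : ℤ) + 2 - 2 →
        fvert G x y v = -(G.dist x y : ℤ) + 2 → idxE G x y s(u, v) = 0 := by
      intro u v hu hv
      rw [idxE_mk, hu, hv, min_eq_left (by omega)]
      omega
    obtain ⟨u0, v0, hadj0, hu0, hv0, -, hS0⟩ := master _ ht p0 hx0 hy0
    have hm0 : s(u0, v0) ∈ S.filter fun e => idxE G x y e = 0 :=
      Finset.mem_filter.mpr ⟨hS0, hidx hu0 hv0⟩
    have second : ∀ w : V, x ≠ w → y ≠ w →
        ∃ u v, G.Adj u v ∧ fvert G x y u = -(G.dist x y : ℤ) + 2 - 2 ∧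
          fvert G x y v = -(G.dist x y : ℤ) + 2 ∧ u ≠ w ∧ v ≠ w ∧ s(u, v) ∈ S := by
      intro w hxw hyw
      obtain ⟨p1, hp1⟩ := two_conn_avoid h2 w x y hxw hyw
      obtain ⟨u, v, hadj, hu, hv, hedge, hSm⟩ := master _ ht p1 hx0 hy0
      refine ⟨u, v, hadj, hu, hv, ?_, ?_, hSm⟩
      · intro h
        exact hp1 (h ▸ p1.fst_mem_support_of_mem_edges hedge)
      · intro h
        exact hp1 (h ▸ p1.snd_mem_support_of_mem_edges hedge)
    rcases eq_or_ne v0 y with hv0y | hv0y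
    · -- v0 = y, hence d = 1
      have hdy : (G.dist x y : ℤ) = 1 := by
        rw [hv0y, hfy] at hv0; omega
      rcases eq_or_ne u0 x with hu0x | hu0x
      · -- e0 = s(x, y)
        obtain ⟨w, hadjw, hwy⟩ := exists_adj_avoid h2 hxy
        have hwx : w ≠ x := (hadjw.ne).symm
        obtain ⟨q, hq⟩ := two_conn_avoid h2 x w y hwx (Ne.symm hxy)
        obtain ⟨u1, v1, hadj1, hu1, hv1, hedge1, hS1⟩ :=
          master _ ht (SimpleGraph.Walk.cons hadjw q) hx0 hy0
        refine Finset.one_lt_card.mpr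
          ⟨s(u1, v1), Finset.mem_filter.mpr ⟨hS1, hidx hu1 hv1⟩, s(u0, v0), hm0, ?_⟩
        rw [hu0x, hv0y]
        intro heq
        rw [Sym2.eq_iff] at heq
        rcases heq with ⟨h1, hb1⟩ | ⟨h1, hb1⟩
        · subst h1; subst hb1
          rw [SimpleGraph.Walk.edges_cons, List.mem_cons] at hedge1
          rcases hedge1 with h | h
          · rw [Sym2.eq_iff] at h
            rcases h with ⟨-, h⟩ | ⟨h, -⟩
            · exact hwy h.symm
            · exact hadjw.ne h
          · exact hq (q.fst_mem_support_of_mem_edges h)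
        · rw [h1, hfy] at hu1
          omega
      · -- u0 ∉ {x, y}
        have hu0y : u0 ≠ y := by
          intro h
          rw [h, hfy] at hu0
          omega
        obtain ⟨u1, v1, hadj1, hu1, hv1, hne1, -, hS1⟩ :=
          second u0 (Ne.symm hu0x) (Ne.symm hu0y)
        refine Finset.one_lt_card.mpr
          ⟨s(u1, v1), Finset.mem_filter.mpr ⟨hS1, hidx hu1 hv1⟩, s(u0, v0), hm0, ?_⟩
        intro heq
        rw [Sym2.eq_iff] at heq
        rcases heq with ⟨h1, -⟩ | ⟨h1, -⟩
        · exact hne1 h1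
        · rw [h1, hv0] at hu1
          omega
    · -- v0 ≠ y
      have hv0x : v0 ≠ x := by
        intro h
        rw [h, hfx] at hv0
        omega
      obtain ⟨u1, v1, hadj1, hu1, hv1, -, hne1, hS1⟩ :=
        second v0 (Ne.symm hv0x) (Ne.symm hv0y)
      refine Finset.one_lt_card.mpr
        ⟨s(u1, v1), Finset.mem_filter.mpr ⟨hS1, hidx hu1 hv1⟩, s(u0, v0), hm0, ?_⟩
      intro heq
      rw [Sym2.eq_iff] at heq
      rcases heq with ⟨-, h1⟩ | ⟨h1, -⟩
      · exact hne1 h1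
      · rw [h1, hv0] at hu1
        omega
  have hsum2 : G.dist x y + 1 ≤ S.card := by
    rw [hcard]
    have h0m : (0 : ℕ) ∈ Finset.range (G.dist x y) := Finset.mem_range.mpr hd1
    rw [← Finset.add_sum_erase _ _ h0m]
    have hrest : ((Finset.range (G.dist x y)).erase 0).card • 1 ≤
        ∑ k ∈ (Finset.range (G.dist x y)).erase 0,
          (S.filter fun e => idxE G x y e = k).card :=
      Finset.card_nsmul_le_sum _ _ _ fun k hk => hfiber k (Finset.mem_erase.mp hk).2
    rw [Finset.card_erase_of_mem h0m, Finset.card_range] at hrest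
    simp only [smul_eq_mul, mul_one] at hrest
    omega
  exact le_trans hsum2 hSsum
end

section
/- Let G be a bipartite graph containing a cycle, and let C = v_1 v_2 ⋯ v_p v_1 be a shortest cycle in G (so p is even, p ≥ 4). Then for each i with 1 ≤ i ≤ p/2 and every edge e of C, μ_{v_i, v_{p/2+i}}(e) = 1; consequently Σ_{e∈E} μ_{v_i, v_{p/2+i}}(e) − d(v_i, v_{p/2+i}) ≥ p/2. -/
open Finset

variable {V : Type*} [Fintype V] [DecidableEq V]

set_option linter.unusedSectionVars false

section Aux
variable {G : SimpleGraph V}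

/-- support getElem equals getVert -/
lemma aux_support_getElem {u v : V} (w : G.Walk u v) (n : ℕ) (hn : n < w.support.length) :
    w.support[n] = w.getVert n := by
  induction w generalizing n with
  | nil => simp at hn; subst hn; simp
  | cons h p ih =>
    cases n with
    | zero => simp
    | succ m =>
      simp only [SimpleGraph.Walk.support_cons, List.getElem_cons_succ,
        SimpleGraph.Walk.getVert_cons_succ]
      exact ih m (by simp only [SimpleGraph.Walk.support_cons, List.length_cons] at hn ⊢; omega)

/-- getVert injectivity on a cycle, on [0, length). -/
lemma aux_cycle_getVert_inj {u : V} {c : G.Walk u u} (hc : c.IsCycle)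
    {a b : ℕ} (ha : a < c.length) (hb : b < c.length)
    (h : c.getVert a = c.getVert b) : a = b := by
  have hnodup := hc.2
  have hlen : c.support.length = c.length + 1 := by simp [SimpleGraph.Walk.length_support]
  have htail : c.support.tail.length = c.length := by
    simp [List.length_tail, hlen]
  have tget : ∀ k (hk : k < c.length), c.support.tail[k]'(by omega) = c.getVert (k + 1) := by
    intro k hk
    rw [List.getElem_tail]
    exact aux_support_getElem c (k+1) (by omega)
  -- injectivity on [1, length]
  have inj1 : ∀ s t, s < c.length → t < c.length →
      c.getVert (s+1) = c.getVert (t+1) → s = t := by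
    intro s t hs ht hst
    have := hnodup.getElem_inj_iff (i := s) (hi := by omega) (j := t) (hj := by omega)
    rw [tget s hs, tget t ht] at this
    exact this.mp hst
  rcases Nat.eq_zero_or_pos a with rfl | hapos
  · rcases Nat.eq_zero_or_pos b with rfl | hbpos
    · rfl
    · exfalso
      -- getVert 0 = u = getVert length
      have h0 : c.getVert b = c.getVert c.length := by
        rw [← h]; simp [SimpleGraph.Walk.getVert_length]
      obtain ⟨b', rfl⟩ := Nat.exists_eq_add_of_lt hbpos
      have h3 := hc.three_le_length
      have := inj1 b' (c.length - 1) (by omega) (by omega)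
        (by rw [show 0 + b' + 1 = b' + 1 by omega] at *
            rw [h0]; congr 1; omega)
      omega
  · rcases Nat.eq_zero_or_pos b with rfl | hbpos
    · exfalso
      have h0 : c.getVert a = c.getVert c.length := by
        rw [h]; simp [SimpleGraph.Walk.getVert_length]
      obtain ⟨a', rfl⟩ := Nat.exists_eq_add_of_lt hapos
      have h3 := hc.three_le_length
      have := inj1 a' (c.length - 1) (by omega) (by omega)
        (by rw [show 0 + a' + 1 = a' + 1 by omega] at *
            rw [h0]; congr 1; omega)
      omega
    · obtain ⟨a', rfl⟩ := Nat.exists_eq_add_of_lt hapos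
      obtain ⟨b', rfl⟩ := Nat.exists_eq_add_of_lt hbpos
      have := inj1 a' b' (by omega) (by omega)
        (by rw [show 0 + a' + 1 = a' + 1 by omega, show 0 + b' + 1 = b' + 1 by omega] at *
            exact h)
      omega


/-- distance along a walk -/
lemma aux_dist_getVert_le (hconn : G.Connected) {u v : V} (w : G.Walk u v) (a k : ℕ)
    (h : a + k ≤ w.length) : G.dist (w.getVert a) (w.getVert (a + k)) ≤ k := by
  induction k with
  | zero => simp
  | succ m ih =>
    have h1 : G.dist (w.getVert a) (w.getVert (a + m)) ≤ m := ih (by omega)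
    have h2 : G.Adj (w.getVert (a + m)) (w.getVert (a + m + 1)) :=
      w.adj_getVert_succ (by omega)
    calc G.dist (w.getVert a) (w.getVert (a + (m+1)))
        ≤ G.dist (w.getVert a) (w.getVert (a + m)) +
          G.dist (w.getVert (a + m)) (w.getVert (a + m + 1)) := by
          rw [show a + (m+1) = a + m + 1 by omega]
          exact hconn.dist_triangle
      _ ≤ m + 1 := by
          have : G.dist (w.getVert (a + m)) (w.getVert (a + m + 1)) = 1 :=
            (SimpleGraph.dist_eq_one_iff_adj).mpr h2
          omega

/-- parity of distances to adjacent vertices in a bipartite graph -/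
lemma aux_dist_adj_ne (hconn : G.Connected) (Cb : G.Coloring Bool) {a b : V} (hab : G.Adj a b)
    (x : V) : G.dist x a ≠ G.dist x b := by
  intro hEq
  obtain ⟨pa, hpa, hla⟩ := hconn.exists_path_of_dist x a
  obtain ⟨pb, hpb, hlb⟩ := hconn.exists_path_of_dist x b
  have h1 : Even pa.length ↔ (Cb x ↔ Cb a) := Cb.even_length_iff_congr pa
  have h2 : Even pb.length ↔ (Cb x ↔ Cb b) := Cb.even_length_iff_congr pb
  have h3 : Even (pa.append (SimpleGraph.Walk.cons hab SimpleGraph.Walk.nil)).length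
      ↔ (Cb x ↔ Cb b) := Cb.even_length_iff_congr _
  rw [SimpleGraph.Walk.length_append] at h3
  simp only [SimpleGraph.Walk.length_cons, SimpleGraph.Walk.length_nil, ← h2] at h3
  rw [hla, hlb, hEq] at h3
  simp [Nat.even_add_one] at h3
  rcases Nat.even_or_odd (G.dist x b) with h | h
  · exact (Nat.not_even_iff_odd.mpr (h3.mpr h)) h
  · exact (Nat.not_even_iff_odd.mpr h) (h3.mp h)


/-- arc of a walk with explicit support -/
lemma aux_arc {u v : V} (w : G.Walk u v) (a k : ℕ) (h : a + k ≤ w.length) :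
    ∃ q : G.Walk (w.getVert a) (w.getVert (a + k)), q.length = k ∧
      q.support = (List.range (k+1)).map (fun t => w.getVert (a + t)) := by
  induction k with
  | zero => exact ⟨SimpleGraph.Walk.nil, rfl, by rw [List.range_succ]; simp⟩
  | succ m ih =>
    obtain ⟨q, hq, hs⟩ := ih (by omega)
    have hadj : G.Adj (w.getVert (a+m)) (w.getVert (a+m+1)) := w.adj_getVert_succ (by omega)
    refine ⟨q.append (SimpleGraph.Walk.cons hadj SimpleGraph.Walk.nil), ?_, ?_⟩
    · simp [SimpleGraph.Walk.length_append, hq]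
    · rw [SimpleGraph.Walk.support_append, hs,
        show List.range (m+1+1) = List.range (m+1) ++ [m+1] from List.range_succ,
        List.map_append]
      rfl

/-- first vertex of a walk satisfying a predicate -/
lemma aux_first_hit {a y : V} (w : G.Walk a y) (S : V → Prop) (hy : S y) :
    ∃ (v : V) (w1 : G.Walk a v) (w2 : G.Walk v y), S v ∧ w = w1.append w2 ∧
      (∀ z ∈ w1.support, S z → z = v) := by
  classical
  induction w with
  | nil => exact ⟨_, .nil, .nil, hy, rfl, fun z hz _ => by simpa using hz⟩
  | @cons a b y h p ih =>
    by_cases hS : S a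
    · refine ⟨a, .nil, .cons h p, hS, rfl, ?_⟩
      intro z hz _; simpa using hz
    · obtain ⟨v, w1, w2, hv, heq, hhit⟩ := ih hy
      refine ⟨v, .cons h w1, w2, hv, by rw [SimpleGraph.Walk.cons_append, heq], ?_⟩
      intro z hz hSz
      rcases by simpa using hz with rfl | hz'
      · exact absurd hSz hS
      · exact hhit z hz' hSz

/-- two distinct paths with the same endpoints give a short cycle -/
lemma aux_two_paths (N : ℕ) : ∀ {x y : V} (p q : G.Walk x y), p.IsPath → q.IsPath →
    p.length ≠ q.length → p.length + q.length ≤ N →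
    ∃ (z : V) (C : G.Walk z z), C.IsCycle ∧ C.length ≤ p.length + q.length := by
  induction N with
  | zero =>
    intro x y p q hp hq hne hb
    exact absurd (by omega : p.length = q.length) hne
  | succ N ih =>
    intro x y p q hp hq hne hb
    cases p with
    | nil =>
      rw [SimpleGraph.Walk.isPath_iff_eq_nil] at hq
      subst hq
      simp at hne
    | @cons x aa y hp1 p' =>
      cases q with
      | nil =>
        have : (SimpleGraph.Walk.cons hp1 p').IsPath := hp
        rw [SimpleGraph.Walk.isPath_iff_eq_nil] at this
        simp at this
      | @cons x bb y hq1 q' =>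
        by_cases hab : aa = bb
        · subst hab
          have hne' : p'.length ≠ q'.length := by
            simp only [SimpleGraph.Walk.length_cons] at hne; omega
          obtain ⟨z, C, hC, hlen⟩ := ih p' q' hp.of_cons hq.of_cons hne'
            (by simp only [SimpleGraph.Walk.length_cons] at hb; omega)
          exact ⟨z, C, hC, by simp only [SimpleGraph.Walk.length_cons]; omega⟩
        · -- direct construction
          set Q := SimpleGraph.Walk.cons hq1 q' with hQdef
          have hxp' : x ∉ p'.support := ((SimpleGraph.Walk.cons_isPath_iff _ _).mp hp).2
          have hxq' : x ∉ q'.support := ((SimpleGraph.Walk.cons_isPath_iff _ _).mp hq).2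
          obtain ⟨v, w1, w2, hv, heq, hhit⟩ :=
            aux_first_hit p' (fun z => z ∈ Q.support) (SimpleGraph.Walk.end_mem_support Q)
          have hp'path : p'.IsPath := hp.of_cons
          have hw1 : w1.IsPath := by
            rw [heq] at hp'path; exact hp'path.of_append_left
          have hp'path2 : p'.IsPath := hp.of_cons
          have hw1sub : ∀ z ∈ w1.support, z ∈ p'.support := by
            intro z hz
            rw [heq, SimpleGraph.Walk.support_append]
            exact List.mem_append_left _ hz
          set T := Q.takeUntil v hv with hTdef
          have hT : T.IsPath := hq.takeUntil hv
          have hTsub : ∀ z ∈ T.support, z ∈ Q.support :=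
            fun z hz => SimpleGraph.Walk.support_takeUntil_subset Q hv hz
          have hTrev : T.reverse.IsPath := hT.reverse
          -- the cycle
          refine ⟨x, SimpleGraph.Walk.cons hp1 (w1.append T.reverse), ?_, ?_⟩
          · rw [SimpleGraph.Walk.isCycle_def]
            refine ⟨?_, by simp, ?_⟩
            · -- trail: edges nodup
              rw [SimpleGraph.Walk.isTrail_def]
              simp only [SimpleGraph.Walk.edges_cons, SimpleGraph.Walk.edges_append]
              rw [List.nodup_cons, List.nodup_append]
              have hvT : v ∉ T.reverse.support.tail := by
                have : T.reverse.support.Nodup := hTrev.support_nodup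
                rw [SimpleGraph.Walk.support_eq_cons T.reverse] at this
                exact (List.nodup_cons.mp this).1
              have hTtailsub : ∀ z ∈ T.reverse.support.tail, z ∈ Q.support := by
                intro z hz
                have : z ∈ T.reverse.support := List.mem_of_mem_tail hz
                rw [SimpleGraph.Walk.support_reverse, List.mem_reverse] at this
                exact hTsub z this
              refine ⟨?_, hw1.isTrail.edges_nodup, hTrev.isTrail.edges_nodup, ?_⟩
              · -- head edge not in rest
                intro hmem
                rw [List.mem_append] at hmem
                rcases hmem with hmem | hmem
                · exact hxp' (hw1sub x (SimpleGraph.Walk.fst_mem_support_of_mem_edges w1 hmem))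
                · rw [SimpleGraph.Walk.edges_reverse, List.mem_reverse] at hmem
                  have hmem' := SimpleGraph.Walk.edges_takeUntil_subset Q hv hmem
                  rw [hQdef] at hmem'
                  simp only [SimpleGraph.Walk.edges_cons] at hmem'
                  rw [List.mem_cons] at hmem'
                  rcases hmem' with heq2 | hmem''
                  · rw [Sym2.congr_right] at heq2
                    exact hab heq2
                  · exact hxq' (SimpleGraph.Walk.fst_mem_support_of_mem_edges q' hmem'')
              · -- disjoint edge sets
                intro e hew1 e' heT hee'
                subst hee'
                rw [SimpleGraph.Walk.edges_reverse, List.mem_reverse] at heT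
                induction e with
                | h c d =>
                  have hc1 : c ∈ w1.support := SimpleGraph.Walk.fst_mem_support_of_mem_edges w1 hew1
                  have hd1 : d ∈ w1.support := SimpleGraph.Walk.snd_mem_support_of_mem_edges w1 hew1
                  have hc2 : c ∈ Q.support := hTsub c (SimpleGraph.Walk.fst_mem_support_of_mem_edges T heT)
                  have hd2 : d ∈ Q.support := hTsub d (SimpleGraph.Walk.snd_mem_support_of_mem_edges T heT)
                  have hcv : c = v := hhit c hc1 hc2
                  have hdv : d = v := hhit d hd1 hd2
                  subst hcv; subst hdv
                  exact G.irrefl (SimpleGraph.Walk.adj_of_mem_edges w1 hew1)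
            · -- support tail nodup
              simp only [SimpleGraph.Walk.support_cons, List.tail_cons,
                SimpleGraph.Walk.support_append]
              rw [List.nodup_append]
              have hvT : v ∉ T.reverse.support.tail := by
                have : T.reverse.support.Nodup := hTrev.support_nodup
                rw [SimpleGraph.Walk.support_eq_cons T.reverse] at this
                exact (List.nodup_cons.mp this).1
              have hTtailsub : ∀ z ∈ T.reverse.support.tail, z ∈ Q.support := by
                intro z hz
                have : z ∈ T.reverse.support := List.mem_of_mem_tail hz
                rw [SimpleGraph.Walk.support_reverse, List.mem_reverse] at this
                exact hTsub z this
              refine ⟨hw1.support_nodup, ?_, ?_⟩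
              · exact hTrev.support_nodup.tail
              · intro z hz1 z' hz2 hzz'
                subst hzz'
                have : z = v := hhit z hz1 (hTtailsub z hz2)
                subst this
                exact hvT hz2
          · -- length bound
            have hl1 : p'.length = w1.length + w2.length := by
              rw [heq, SimpleGraph.Walk.length_append]
            have hl2 : T.length ≤ Q.length := SimpleGraph.Walk.length_takeUntil_le Q hv
            simp only [hQdef, SimpleGraph.Walk.length_cons, SimpleGraph.Walk.length_append,
              SimpleGraph.Walk.length_reverse] at hl2 ⊢
            omega


/-- every edge of a walk is between consecutive getVerts -/
lemma aux_edge_index {u v : V} (w : G.Walk u v) :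
    ∀ e ∈ w.edges, ∃ j < w.length, e = s(w.getVert j, w.getVert (j+1)) := by
  induction w with
  | nil => simp
  | @cons a b y h p ih =>
    intro e he
    rw [SimpleGraph.Walk.edges_cons, List.mem_cons] at he
    rcases he with rfl | he
    · exact ⟨0, by simp, by simp [SimpleGraph.Walk.getVert_cons_succ]⟩
    · obtain ⟨j, hj, rfl⟩ := ih e he
      exact ⟨j + 1, by simp; omega, by simp [SimpleGraph.Walk.getVert_cons_succ]⟩

end Aux

theorem mu_on_shortest_cycle (G : SimpleGraph V) [DecidableRel G.Adj]
    (hconn : G.Connected) (hbip : G.Colorable 2) (u : V)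
    (c : G.Walk u u) (hc : c.IsCycle)
    (hmin : ∀ (w : V) (c' : G.Walk w w), c'.IsCycle → c.length ≤ c'.length) :
    ∀ i < c.length / 2,
      (∀ e ∈ c.edges, mu G (c.getVert i) (c.getVert (c.length / 2 + i)) e = 1) ∧
      G.dist (c.getVert i) (c.getVert (c.length / 2 + i)) + c.length / 2 ≤
        ∑ e ∈ G.edgeFinset, mu G (c.getVert i) (c.getVert (c.length / 2 + i)) e := by
  intro i hi
  obtain ⟨C2⟩ := hbip
  set Cb : G.Coloring Bool := G.recolorOfEquiv finTwoEquiv C2 with hCb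
  have h3 : 3 ≤ c.length := hc.three_le_length
  have hev : Even c.length := (Cb.even_length_iff_congr c).mpr Iff.rfl
  set n : ℕ := c.length / 2 with hndef
  have hn2 : c.length = n + n := by
    obtain ⟨m, hm⟩ := hev; omega
  have hn2le : 2 ≤ n := by omega
  set x : V := c.getVert i with hxdef
  set y : V := c.getVert (n + i) with hydef
  -- distance upper bound along the cycle
  have harc : ∀ a k : ℕ, a + k ≤ c.length →
      G.dist (c.getVert a) (c.getVert (a + k)) ≤ k :=
    fun a k h => aux_dist_getVert_le hconn c a k h
  have hdle : G.dist x y ≤ n := by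
    have := harc i n (by omega)
    rw [Nat.add_comm i n] at this
    rwa [← hxdef, ← hydef] at this
  -- getVert injectivity
  have hinj : ∀ a b : ℕ, a < c.length → b < c.length →
      c.getVert a = c.getVert b → a = b := fun a b ha hb h =>
    aux_cycle_getVert_inj hc ha hb h
  have hxy : x ≠ y := by
    intro h
    have := hinj i (n + i) (by omega) (by omega) h
    omega
  -- the antipodal distance is exactly n
  have hdeq : G.dist x y = n := by
    by_contra hne
    have hm : G.dist x y < n := lt_of_le_of_ne hdle hne
    obtain ⟨P, hP, hPlen⟩ := hconn.exists_path_of_dist x y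
    obtain ⟨Q0, hQ0len, hQ0supp⟩ := aux_arc c i n (by omega)
    have hyeq : c.getVert (i + n) = y := by rw [hydef, Nat.add_comm i n]
    set Q : G.Walk x y := Q0.copy rfl hyeq with hQdef
    have hQlen : Q.length = n := by simp [hQdef, hQ0len]
    have hQpath : Q.IsPath := by
      rw [SimpleGraph.Walk.isPath_def]
      have : Q.support = Q0.support := by simp [hQdef]
      rw [this, hQ0supp]
      refine List.Nodup.map_on ?_ List.nodup_range
      intro s hs t ht hst
      rw [List.mem_range] at hs ht
      have := hinj (i + s) (i + t) (by omega) (by omega) hst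
      omega
    have hlne : P.length ≠ Q.length := by omega
    obtain ⟨z, C, hC, hClen⟩ := aux_two_paths (P.length + Q.length) P Q hP hQpath hlne le_rfl
    have := hmin z C hC
    omega
  -- the distance sum identity
  have hfg : ∀ j, j ≤ c.length →
      G.dist x (c.getVert j) + G.dist y (c.getVert j) = n := by
    intro j hj
    have hge : n ≤ G.dist x (c.getVert j) + G.dist y (c.getVert j) := by
      have htri : G.dist x y ≤ G.dist x (c.getVert j) + G.dist (c.getVert j) y :=
        hconn.dist_triangle
      have hcomm : G.dist (c.getVert j) y = G.dist y (c.getVert j) :=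
        SimpleGraph.dist_comm
      omega
    have hle : G.dist x (c.getVert j) + G.dist y (c.getVert j) ≤ n := by
      rcases le_or_gt i j with hij | hij
      · rcases le_or_gt j (n + i) with hjn | hjn
        · -- i ≤ j ≤ n + i
          have h1 : G.dist x (c.getVert j) ≤ j - i := by
            have := harc i (j - i) (by omega)
            rwa [show i + (j - i) = j by omega, ← hxdef] at this
          have h2 : G.dist y (c.getVert j) ≤ n + i - j := by
            have := harc j (n + i - j) (by omega)
            rw [show j + (n + i - j) = n + i by omega, ← hydef] at this
            rwa [G.dist_comm]
          omega
        · -- n + i < j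
          have h1 : G.dist y (c.getVert j) ≤ j - (n + i) := by
            have := harc (n + i) (j - (n + i)) (by omega)
            rwa [show n + i + (j - (n + i)) = j by omega, ← hydef] at this
          have h2 : G.dist x (c.getVert j) ≤ (c.length - j) + i := by
            have ha := harc j (c.length - j) (by omega)
            rw [show j + (c.length - j) = c.length by omega] at ha
            have hb := harc 0 i (by omega)
            rw [Nat.zero_add, ← hxdef] at hb
            have hu : c.getVert c.length = c.getVert 0 := by
              rw [SimpleGraph.Walk.getVert_length, SimpleGraph.Walk.getVert_zero]
            rw [hu] at ha
            have htri : G.dist (c.getVert j) x ≤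
                G.dist (c.getVert j) (c.getVert 0) + G.dist (c.getVert 0) x :=
              hconn.dist_triangle
            have hcomm : G.dist x (c.getVert j) = G.dist (c.getVert j) x :=
              SimpleGraph.dist_comm
            omega
          omega
      · -- j < i
        have h1 : G.dist x (c.getVert j) ≤ i - j := by
          have := harc j (i - j) (by omega)
          rw [show j + (i - j) = i by omega, ← hxdef] at this
          rwa [G.dist_comm]
        have h2 : G.dist y (c.getVert j) ≤ (n - i) + j := by
          have ha := harc (n + i) (n - i) (by omega)
          rw [show n + i + (n - i) = c.length by omega, ← hydef] at ha
          have hu : c.getVert c.length = c.getVert 0 := by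
            rw [SimpleGraph.Walk.getVert_length, SimpleGraph.Walk.getVert_zero]
          rw [hu] at ha
          have hb := harc 0 j (by omega)
          rw [Nat.zero_add] at hb
          have htri : G.dist y (c.getVert j) ≤
              G.dist y (c.getVert 0) + G.dist (c.getVert 0) (c.getVert j) :=
            hconn.dist_triangle
          omega
        omega
    omega
  -- mu equals one on cycle edges
  have hmu : ∀ j, j < c.length → mu G x y s(c.getVert j, c.getVert (j+1)) = 1 := by
    intro j hj
    have hadj : G.Adj (c.getVert j) (c.getVert (j+1)) := c.adj_getVert_succ hj
    have hAB : G.dist x (c.getVert j) ≠ G.dist x (c.getVert (j+1)) :=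
      aux_dist_adj_ne hconn Cb hadj x
    have e1 := hfg j (by omega)
    have e2 := hfg (j+1) (by omega)
    show (if (G.dist x (c.getVert j) < G.dist x (c.getVert (j+1)) ∧
          G.dist y (c.getVert (j+1)) < G.dist y (c.getVert j)) ∨
        (G.dist x (c.getVert (j+1)) < G.dist x (c.getVert j) ∧
          G.dist y (c.getVert j) < G.dist y (c.getVert (j+1))) then 1 else 0) = 1
    rw [if_pos (by omega)]
  -- conclusion
  have hone : ∀ e ∈ c.edges, mu G x y e = 1 := by
    intro e he
    obtain ⟨j, hj, rfl⟩ := aux_edge_index c e he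
    exact hmu j hj
  refine ⟨hone, ?_⟩
  have hnodup : c.edges.Nodup := hc.edges_nodup
  have hsub : c.edges.toFinset ⊆ G.edgeFinset := by
    intro e he
    rw [List.mem_toFinset] at he
    rw [SimpleGraph.mem_edgeFinset]
    exact c.edges_subset_edgeSet he
  have hcard : c.edges.toFinset.card = c.length := by
    rw [List.toFinset_card_of_nodup hnodup, SimpleGraph.Walk.length_edges]
  have hsum1 : ∑ e ∈ c.edges.toFinset, mu G x y e = c.length := by
    rw [Finset.sum_congr rfl (fun e he => hone e (List.mem_toFinset.mp he))]
    simp [hcard]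
  have hsum2 : ∑ e ∈ c.edges.toFinset, mu G x y e ≤
      ∑ e ∈ G.edgeFinset, mu G x y e :=
    Finset.sum_le_sum_of_subset hsub
  omega
end

section
/- Let G be a connected graph, let x, y be vertices in different blocks, and suppose every path from x to y passes through a cut vertex w. Then for any edge e not on any shortest x–y path, if μ_{x,w}(e) = 1 and e lies in the block-component of x (so every path from the endpoints of e to y goes through w), then μ_{x,y}(e) = 1. -/
open Finset

variable {V : Type*} [Fintype V] [DecidableEq V]

private lemma dist_add_of_sep' (G : SimpleGraph V) (hconn : G.Connected) (z y w : V)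
    (h : ∀ p : G.Walk z y, p.IsPath → w ∈ p.support) :
    G.dist z y = G.dist z w + G.dist w y := by
  obtain ⟨p, hp⟩ := hconn.exists_walk_length_eq_dist z y
  have hw : w ∈ p.bypass.support := h p.bypass p.bypass_isPath
  have hsplit := p.bypass.take_spec hw
  have hlen : (p.bypass.takeUntil w hw).length + (p.bypass.dropUntil w hw).length
      = p.bypass.length := by
    rw [← SimpleGraph.Walk.length_append, hsplit]
  have h1 : G.dist z w ≤ (p.bypass.takeUntil w hw).length :=
    SimpleGraph.dist_le _
  have h2 : G.dist w y ≤ (p.bypass.dropUntil w hw).length :=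
    SimpleGraph.dist_le _
  have h3 : p.bypass.length ≤ p.length := SimpleGraph.Walk.length_bypass_le p
  have h4 : G.dist z y ≤ G.dist z w + G.dist w y :=
    hconn.dist_triangle
  omega

theorem mu_through_cut_vertex (G : SimpleGraph V) (hconn : G.Connected)
    (x y w : V) (e : Sym2 V) (he : e ∈ G.edgeSet)
    (hsep : ∀ p : G.Walk x y, p.IsPath → w ∈ p.support)
    (hnotshort : ∀ p : G.Walk x y, p.IsPath → p.length = G.dist x y → e ∉ p.edges)
    (hside : ∀ z ∈ e, ∀ p : G.Walk z y, p.IsPath → w ∈ p.support)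
    (hmu : mu G x w e = 1) : mu G x y e = 1 := by
  revert he hsep hnotshort hside hmu
  induction e using Sym2.ind with
  | _ u v =>
    intro he hsep hnotshort hside hmu
    have hu : G.dist u y = G.dist u w + G.dist w y :=
      dist_add_of_sep' G hconn u y w (hside u (by simp))
    have hv : G.dist v y = G.dist v w + G.dist w y :=
      dist_add_of_sep' G hconn v y w (hside v (by simp))
    simp only [mu, Sym2.lift_mk] at hmu ⊢
    rw [SimpleGraph.dist_comm (G:=G) (u:=y) (v:=u), SimpleGraph.dist_comm (G:=G) (u:=y) (v:=v), hu, hv]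
    split at hmu
    · rename_i h
      rw [if_pos]
      rcases h with ⟨h1, h2⟩ | ⟨h1, h2⟩
      · left
        refine ⟨h1, ?_⟩
        rw [SimpleGraph.dist_comm (G:=G) (u:=w) (v:=v), SimpleGraph.dist_comm (G:=G) (u:=w) (v:=u)] at h2
        omega
      · right
        refine ⟨h1, ?_⟩
        rw [SimpleGraph.dist_comm (G:=G) (u:=w) (v:=v), SimpleGraph.dist_comm (G:=G) (u:=w) (v:=u)] at h2
        omega
    · exact absurd hmu (by norm_num)
end

section
/- If G is bipartite with an even cycle C of length p being a shortest cycle, then C is isometric in G: for any two vertices u, v on C, d_G(u,v) equals the distance between u and v along C. -/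
open Finset

variable {V : Type*} [Fintype V] [DecidableEq V]

section AuxIsometric

open SimpleGraph Walk

set_option linter.unusedSectionVars false

lemma cycle_arcs_isPath {G : SimpleGraph V} {x y : V} (c : G.Walk x x)
    (hc : c.IsCycle) (hy : y ∈ c.support) (hxy : y ≠ x) :
    (c.takeUntil y hy).IsPath ∧ (c.dropUntil y hy).IsPath := by
  have hspec := c.take_spec hy
  set t := c.takeUntil y hy with ht
  set d := c.dropUntil y hy with hd
  have hsupp : c.support.tail = t.support.tail ++ d.support.tail := by
    rw [← hspec, tail_support_append]
  have hnodup : (t.support.tail ++ d.support.tail).Nodup := hsupp ▸ hc.support_nodup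
  rw [List.nodup_append] at hnodup
  obtain ⟨h1, h2, h3⟩ := hnodup
  have hxd : x ∈ d.support.tail := end_mem_tail_support_of_ne hxy d
  have hyt : y ∈ t.support.tail := end_mem_tail_support_of_ne (Ne.symm hxy) t
  constructor
  · rw [isPath_def, t.support_eq_cons]
    exact List.nodup_cons.mpr ⟨fun hx => h3 _ hx _ hxd rfl, h1⟩
  · rw [isPath_def, d.support_eq_cons]
    exact List.nodup_cons.mpr ⟨fun hyd => h3 _ hyt _ hyd rfl, h2⟩

lemma two_paths_absurd {G : SimpleGraph V} {p : ℕ}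
    (hmin : ∀ (w : V) (c' : G.Walk w w), c'.IsCycle → p ≤ c'.length)
    {x y : V} (P Q : G.Walk x y) (hP : P.IsPath) (hQ : Q.IsPath)
    (hne : P.length ≠ Q.length) (hlen : P.length + Q.length < p) : False := by
  set s : Set (Sym2 V) := {e | e ∈ P.edges ++ Q.edges} with hs
  set K := SimpleGraph.fromEdgeSet s with hK
  have hmem : ∀ e ∈ P.edges ++ Q.edges, e ∈ K.edgeSet := by
    intro e he
    rw [hK, edgeSet_fromEdgeSet]
    refine ⟨he, G.not_isDiag_of_mem_edgeSet ?_⟩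
    rcases List.mem_append.mp he with h | h
    · exact P.edges_subset_edgeSet h
    · exact Q.edges_subset_edgeSet h
  have hPK : ∀ e ∈ P.edges, e ∈ K.edgeSet := fun e he =>
    hmem e (List.mem_append_left _ he)
  have hQK : ∀ e ∈ Q.edges, e ∈ K.edgeSet := fun e he =>
    hmem e (List.mem_append_right _ he)
  have hnac : ¬ K.IsAcyclic := by
    intro hac
    apply hne
    have heq := hac.path_unique ⟨P.transfer K hPK, hP.transfer hPK⟩
      ⟨Q.transfer K hQK, hQ.transfer hQK⟩
    have := congrArg (fun q : K.Path x y => (q : K.Walk x y).length) heq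
    simpa [Walk.length_transfer] using this
  rw [SimpleGraph.IsAcyclic] at hnac
  push_neg at hnac
  obtain ⟨w, cw, hcw⟩ := hnac
  have hKG : ∀ e ∈ cw.edges, e ∈ G.edgeSet := by
    intro e he
    have := cw.edges_subset_edgeSet he
    rw [hK, edgeSet_fromEdgeSet] at this
    rcases List.mem_append.mp this.1 with h | h
    · exact P.edges_subset_edgeSet h
    · exact Q.edges_subset_edgeSet h
  have hbig : p ≤ cw.length := by
    have := hmin w (cw.transfer G hKG) (hcw.transfer hKG)
    rwa [Walk.length_transfer] at this
  have hsub : cw.edges ⊆ P.edges ++ Q.edges := by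
    intro e he
    have := cw.edges_subset_edgeSet he
    rw [hK, edgeSet_fromEdgeSet] at this
    exact this.1
  have hsmall : cw.length ≤ P.length + Q.length := by
    have := (List.subperm_of_subset hcw.isTrail.edges_nodup hsub).length_le
    simpa [Walk.length_edges] using this
  omega

lemma end_mem_support_tail' {G : SimpleGraph V} {u : V} (c : G.Walk u u) (h : ¬c.Nil) :
    u ∈ c.support.tail := by
  cases c with
  | nil => simp at h
  | cons h' q => simpa using q.end_mem_support


end AuxIsometric

open SimpleGraph Walk in
theorem shortest_cycle_isometric (G : SimpleGraph V)
    (hbip : G.Colorable 2) (p : ℕ) (hpe : Even p) (u : V)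
    (c : G.Walk u u) (hc : c.IsCycle) (hp : c.length = p)
    (hmin : ∀ (w : V) (c' : G.Walk w w), c'.IsCycle → c.length ≤ c'.length) :
    ∀ x ∈ c.support, ∀ y ∈ c.support,
      G.dist x y = (SimpleGraph.fromEdgeSet {e | e ∈ c.edges}).dist x y := by
  intro x hx y hy
  set H := SimpleGraph.fromEdgeSet {e | e ∈ c.edges} with hH
  by_cases hxy : x = y
  · subst hxy; rw [SimpleGraph.dist_self, SimpleGraph.dist_self]
  -- rotate the cycle to start at x
  have hc1 : (c.rotate x hx).IsCycle := hc.rotate hx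
  set c1 := c.rotate x hx with hc1def
  have hlen1 : c1.length = p := by
    have := (c.rotate_darts x hx).perm.length_eq
    rw [Walk.length_darts, Walk.length_darts, hp] at this; exact this
  have hytail : y ∈ c.support.tail := by
    rcases (Walk.mem_support_iff c).mp hy with h | h
    · exact h ▸ end_mem_support_tail' c hc.not_nil
    · exact h
  have hy1 : y ∈ c1.support := by
    rw [Walk.mem_support_iff c1]
    exact Or.inr ((c.support_rotate x hx).mem_iff.mpr hytail)
  set t := c1.takeUntil y hy1 with ht
  set d := c1.dropUntil y hy1 with hd
  obtain ⟨htp, hdp⟩ := cycle_arcs_isPath c1 hc1 hy1 (Ne.symm hxy)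
  have hsum : t.length + d.length = p := by
    have := congrArg Walk.length (c1.take_spec hy1)
    rwa [Walk.length_append, hlen1] at this
  -- edges of arcs are edges of c
  have hedgec1 : ∀ e ∈ c1.edges, e ∈ ({e | e ∈ c.edges} : Set (Sym2 V)) := by
    intro e he
    exact (c.rotate_edges x hx).mem_iff.mp he
  have htH : ∀ e ∈ t.edges, e ∈ H.edgeSet := by
    intro e he
    have hec1 : e ∈ c1.edges := c1.edges_takeUntil_subset hy1 he
    rw [hH, SimpleGraph.edgeSet_fromEdgeSet]
    exact ⟨hedgec1 e hec1, G.not_isDiag_of_mem_edgeSet (c1.edges_subset_edgeSet hec1)⟩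
  have hdH : ∀ e ∈ d.edges, e ∈ H.edgeSet := by
    intro e he
    have hec1 : e ∈ c1.edges := c1.edges_dropUntil_subset hy1 he
    rw [hH, SimpleGraph.edgeSet_fromEdgeSet]
    exact ⟨hedgec1 e hec1, G.not_isDiag_of_mem_edgeSet (c1.edges_subset_edgeSet hec1)⟩
  -- H ≤ G on edges
  have hHG : ∀ e ∈ H.edgeSet, e ∈ G.edgeSet := by
    intro e he
    rw [hH, SimpleGraph.edgeSet_fromEdgeSet] at he
    exact c.edges_subset_edgeSet he.1
  -- dist G ≤ dist H
  have hreach : H.Reachable x y := ⟨t.transfer H htH⟩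
  obtain ⟨w, hw⟩ := hreach.exists_walk_length_eq_dist
  have hle : G.dist x y ≤ H.dist x y := by
    have := SimpleGraph.dist_le (w.transfer G (fun e he => hHG e (w.edges_subset_edgeSet he)))
    rwa [Walk.length_transfer, hw] at this
  -- dist H ≤ arc lengths
  have hHt : H.dist x y ≤ t.length := by
    have := SimpleGraph.dist_le (t.transfer H htH)
    rwa [Walk.length_transfer] at this
  have hHd : H.dist x y ≤ d.length := by
    have := SimpleGraph.dist_le ((d.transfer H hdH).reverse)
    rwa [Walk.length_reverse, Walk.length_transfer] at this
  -- suppose strict inequality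
  have hnlt : ¬ G.dist x y < H.dist x y := by
    intro hlt
    have hreachG : G.Reachable x y := ⟨t⟩
    obtain ⟨Pw, hPw⟩ := hreachG.exists_walk_length_eq_dist
    set P := Pw.bypass with hP
    have hPpath : P.IsPath := Pw.bypass_isPath
    have hPlen : P.length = G.dist x y :=
      le_antisymm (hPw ▸ Pw.length_bypass_le) (SimpleGraph.dist_le P)
    have hmin' : ∀ (w : V) (c' : G.Walk w w), c'.IsCycle → p ≤ c'.length := by
      intro w c' hc'
      exact hp ▸ hmin w c' hc'
    rcases le_total t.length d.length with hcase | hcase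
    · exact two_paths_absurd hmin' P d.reverse hPpath (hdp.reverse)
        (by rw [Walk.length_reverse]; omega) (by rw [Walk.length_reverse]; omega)
    · exact two_paths_absurd hmin' P t hPpath htp (by omega) (by omega)
  omega
end
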